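/- For every integer N ≥ 3 there exists a joint distribution p on {1,…,N}² with zero diagonal, nonnegative entries summing to 1, such that the order ratio α(p) = e(p)/(e(p)+r(p)) equals exactly 1/e, and hence the resilience R(p) = -α ln α attains the optimal value 1/e. -/

import Mathlib

open Real Finset

lemma succ_ne (m : ℕ) (i : Fin (m+3)) : i + 1 ≠ i := by
  intro h
  exact one_ne_zero (add_left_cancel (h.trans (add_zero i).symm))

lemma row_sum (m : ℕ) (x y : ℝ) (i : Fin (m+3)) :
    ∑ j : Fin (m+3), (if j = i then 0 else if j = i + 1 then x else y)
      = x + ((m:ℝ)+1) * y := by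
  have key : ∀ j : Fin (m+3), (if j = i then (0:ℝ) else if j = i + 1 then x else y)
      = y + (if j = i then -y else 0) + (if j = i + 1 then x - y else 0) := by
    intro j
    rcases eq_or_ne j i with h1 | h1
    · subst h1
      simp [(show j ≠ j + 1 from fun h => succ_ne m j h.symm)]
    · rcases eq_or_ne j (i+1) with h2 | h2 <;> simp [h1, h2]
  simp only [key]
  rw [Finset.sum_add_distrib, Finset.sum_add_distrib, Finset.sum_const,
    Finset.card_univ, Fintype.card_fin]
  simp only [Finset.sum_ite_eq', Finset.mem_univ, if_true]
  push_cast
  ring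

lemma col_sum (m : ℕ) (x y : ℝ) (j : Fin (m+3)) :
    ∑ i : Fin (m+3), (if j = i then 0 else if j = i + 1 then x else y)
      = x + ((m:ℝ)+1) * y := by
  have key : ∀ i : Fin (m+3), (if j = i then (0:ℝ) else if j = i + 1 then x else y)
      = y + (if i = j then -y else 0) + (if i = j - 1 then x - y else 0) := by
    intro i
    rcases eq_or_ne i j with h1 | h1
    · subst h1
      have hne1 : ¬ (i = i + 1) := fun h => succ_ne m i h.symm
      have hne2 : ¬ (i = i - 1) := by
        intro h
        apply succ_ne m (i - 1)
        rw [sub_add_cancel, ← h]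
      simp [hne1, hne2]
    · rcases eq_or_ne i (j - 1) with h2 | h2
      · have hj : j = i + 1 := by rw [h2, sub_add_cancel]
        simp [h1, Ne.symm h1, hj]
      · have hj : j ≠ i + 1 := by
          intro h; exact h2 (by rw [h, add_sub_cancel_right])
        simp [Ne.symm h1, h1, hj, h2]
  simp only [key]
  rw [Finset.sum_add_distrib, Finset.sum_add_distrib, Finset.sum_const,
    Finset.card_univ, Fintype.card_fin]
  simp only [Finset.sum_ite_eq', Finset.mem_univ, if_true]
  push_cast
  ring

lemma double_sum (m : ℕ) (x y : ℝ) :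
    ∑ i : Fin (m+3), ∑ j : Fin (m+3), (if j = i then 0 else if j = i + 1 then x else y)
      = ((m:ℝ)+3) * x + ((m:ℝ)+3) * ((m:ℝ)+1) * y := by
  simp only [row_sum]
  rw [Finset.sum_const, Finset.card_univ, Fintype.card_fin]
  push_cast
  ring

noncomputable def aFun (m : ℕ) (t : ℝ) : ℝ := t / ((m:ℝ)+3) + (1-t) / (((m:ℝ)+3)*((m:ℝ)+2))
noncomputable def bFun (m : ℕ) (t : ℝ) : ℝ := (1-t) / (((m:ℝ)+3)*((m:ℝ)+2))
noncomputable def SFun (m : ℕ) (t : ℝ) : ℝ :=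
  ((m:ℝ)+3) * (aFun m t * Real.log (aFun m t))
    + ((m:ℝ)+3)*((m:ℝ)+1) * (bFun m t * Real.log (bFun m t))

lemma aFun_eq (m : ℕ) (t : ℝ) :
    aFun m t = (1 + t*((m:ℝ)+1)) / (((m:ℝ)+3)*((m:ℝ)+2)) := by
  have h3 : ((m:ℝ)+3) ≠ 0 := by positivity
  have h2 : ((m:ℝ)+2) ≠ 0 := by positivity
  unfold aFun; field_simp; ring

lemma aFun_pos (m : ℕ) {t : ℝ} (ht : t ∈ Set.Icc (0:ℝ) 1) : 0 < aFun m t := by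
  rw [aFun_eq]
  have := ht.1
  apply div_pos (by nlinarith [(Nat.cast_nonneg m : (0:ℝ) ≤ (m:ℝ))]) (by positivity)

lemma aFun_lt_one (m : ℕ) {t : ℝ} (ht : t ∈ Set.Icc (0:ℝ) 1) : aFun m t < 1 := by
  rw [aFun_eq]
  rw [div_lt_one (by positivity)]
  have h1 := ht.1; have h2 := ht.2
  nlinarith [(Nat.cast_nonneg m : (0:ℝ) ≤ (m:ℝ))]

lemma bFun_nonneg (m : ℕ) {t : ℝ} (ht : t ∈ Set.Icc (0:ℝ) 1) : 0 ≤ bFun m t := by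
  have := ht.2
  unfold bFun
  apply div_nonneg (by linarith) (by positivity)

lemma bFun_le_one (m : ℕ) {t : ℝ} (ht : t ∈ Set.Icc (0:ℝ) 1) : bFun m t ≤ 1 := by
  have h1 := ht.1
  unfold bFun
  rw [div_le_one (by positivity)]
  nlinarith [(Nat.cast_nonneg m : (0:ℝ) ≤ (m:ℝ))]

lemma SFun_neg (m : ℕ) {t : ℝ} (ht : t ∈ Set.Icc (0:ℝ) 1) : SFun m t < 0 := by
  have ha := aFun_pos m ht
  have ha1 := aFun_lt_one m ht
  have hb := bFun_nonneg m ht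
  have hb1 := bFun_le_one m ht
  have h1 : aFun m t * Real.log (aFun m t) < 0 :=
    mul_neg_of_pos_of_neg ha (Real.log_neg ha ha1)
  have h2 : bFun m t * Real.log (bFun m t) ≤ 0 :=
    mul_nonpos_of_nonneg_of_nonpos hb (Real.log_nonpos hb hb1)
  unfold SFun
  have c1 : (0:ℝ) < (m:ℝ)+3 := by positivity
  have c2 : (0:ℝ) ≤ ((m:ℝ)+3)*((m:ℝ)+1) := by positivity
  nlinarith

lemma SFun_continuous (m : ℕ) : Continuous (SFun m) := by
  have ha : Continuous (aFun m) := by unfold aFun; fun_prop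
  have hb : Continuous (bFun m) := by unfold bFun; fun_prop
  exact (continuous_const.mul (Real.continuous_mul_log.comp ha)).add
    (continuous_const.mul (Real.continuous_mul_log.comp hb))

lemma SFun_zero (m : ℕ) : SFun m 0 = -Real.log (((m:ℝ)+3)*((m:ℝ)+2)) := by
  have hD : (((m:ℝ)+3)*((m:ℝ)+2)) ≠ 0 := by positivity
  have ha0 : aFun m 0 = 1/(((m:ℝ)+3)*((m:ℝ)+2)) := by unfold aFun; norm_num
  have hb0 : bFun m 0 = 1/(((m:ℝ)+3)*((m:ℝ)+2)) := by unfold bFun; norm_num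
  rw [SFun, ha0, hb0, Real.log_div one_ne_zero hD, Real.log_one]
  field_simp
  ring

lemma SFun_one (m : ℕ) : SFun m 1 = -Real.log ((m:ℝ)+3) := by
  have h3 : ((m:ℝ)+3) ≠ 0 := by positivity
  have ha1 : aFun m 1 = 1/((m:ℝ)+3) := by unfold aFun; norm_num
  have hb1 : bFun m 1 = 0 := by unfold bFun; norm_num
  rw [SFun, ha1, hb1, Real.log_div one_ne_zero h3, Real.log_one]
  simp
  field_simp

lemma gval_zero_le (m : ℕ) :
    (SFun m 0 + 2 * Real.log ((m:ℝ)+3)) / (-SFun m 0) ≤ (Real.exp 1)⁻¹ := by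
  have hm : (0:ℝ) ≤ (m:ℝ) := Nat.cast_nonneg m
  have h3 : (0:ℝ) < (m:ℝ)+3 := by linarith
  have h2 : (0:ℝ) < (m:ℝ)+2 := by linarith
  have hD : (1:ℝ) < ((m:ℝ)+3)*((m:ℝ)+2) := by nlinarith
  have hDpos : 0 < Real.log (((m:ℝ)+3)*((m:ℝ)+2)) := Real.log_pos hD
  rw [SFun_zero, neg_neg]
  have hnum : -Real.log (((m:ℝ)+3)*((m:ℝ)+2)) + 2 * Real.log ((m:ℝ)+3)
      = Real.log (((m:ℝ)+3)/((m:ℝ)+2)) := by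
    rw [Real.log_mul h3.ne' h2.ne', Real.log_div h3.ne' h2.ne']
    ring
  rw [hnum, div_le_iff₀ hDpos]
  set L1 := Real.log (((m:ℝ)+3)/((m:ℝ)+2)) with hL1def
  have hL1 : L1 ≤ Real.log (3/2) := by
    apply Real.log_le_log (by positivity)
    rw [div_le_div_iff₀ h2 (by norm_num)]
    linarith
  have h32 : Real.log (3/2) < 1/2 := by
    rw [Real.log_lt_iff_lt_exp (by norm_num)]
    have h := Real.exp_one_gt_d9
    have hsq : Real.exp (1/2) * Real.exp (1/2) = Real.exp 1 := by
      rw [← Real.exp_add]; norm_num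
    nlinarith [Real.exp_pos (1/2:ℝ)]
  have h6 : (3/2 : ℝ) < Real.log 6 := by
    rw [Real.lt_log_iff_exp_lt (by norm_num)]
    have h := Real.exp_one_lt_d9
    have hsq : Real.exp (3/2) * Real.exp (3/2) = Real.exp 1 * Real.exp 1 * Real.exp 1 := by
      rw [← Real.exp_add, ← Real.exp_add, ← Real.exp_add]; norm_num
    nlinarith [Real.exp_pos (3/2:ℝ), Real.exp_pos (1:ℝ)]
  have hD6 : Real.log 6 ≤ Real.log (((m:ℝ)+3)*((m:ℝ)+2)) := by
    apply Real.log_le_log (by norm_num)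
    nlinarith
  have hhalf : L1 ≤ 1/2 := by linarith
  have hE := Real.exp_one_lt_d9
  have hEpos := Real.exp_pos (1:ℝ)
  rw [inv_mul_eq_div, le_div_iff₀ hEpos]
  nlinarith [mul_le_mul_of_nonneg_right hhalf hEpos.le]

lemma exists_t (m : ℕ) : ∃ t ∈ Set.Icc (0:ℝ) 1,
    (SFun m t + 2 * Real.log ((m:ℝ)+3)) / (-SFun m t) = (Real.exp 1)⁻¹ := by
  set g := fun t => (SFun m t + 2 * Real.log ((m:ℝ)+3)) / (-SFun m t) with hg
  have hcont : ContinuousOn g (Set.Icc 0 1) := by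
    apply ContinuousOn.div
    · exact ((SFun_continuous m).add continuous_const).continuousOn
    · exact (SFun_continuous m).neg.continuousOn
    · intro t ht
      have := SFun_neg m ht
      exact (neg_pos.mpr this).ne'
  have hlogn : 0 < Real.log ((m:ℝ)+3) := by
    apply Real.log_pos
    have : (0:ℝ) ≤ (m:ℝ) := Nat.cast_nonneg m
    linarith
  have h1 : g 1 = 1 := by
    simp only [hg, SFun_one, neg_neg]
    rw [div_eq_one_iff_eq hlogn.ne']
    ring
  have hinv1 : (Real.exp 1)⁻¹ ≤ 1 := by
    have := Real.exp_one_gt_d9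
    rw [inv_le_one₀ (Real.exp_pos 1)]
    linarith
  have hmem : (Real.exp 1)⁻¹ ∈ Set.Icc (g 0) (g 1) :=
    ⟨gval_zero_le m, by rw [h1]; exact hinv1⟩
  have := intermediate_value_Icc (by norm_num : (0:ℝ) ≤ 1) hcont hmem
  obtain ⟨t, ht, hgt⟩ := this
  exact ⟨t, ht, hgt⟩

noncomputable def Pmat (m : ℕ) (A B : ℝ) : Fin (m+3) → Fin (m+3) → ℝ :=
  fun i j => if j = i then 0 else if j = i + 1 then A else B

theorem exists_optimal_resilience (N : ℕ) (hN : 3 ≤ N) :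
    ∃ P : Fin N → Fin N → ℝ,
      (∀ i j, 0 ≤ P i j) ∧ (∀ i, P i i = 0) ∧
      (∑ i : Fin N, ∑ j : Fin N, P i j = 1) ∧
      ∃ E R : ℝ,
        E = (∑ i : Fin N, ∑ j : Fin N,
          P i j * Real.log (P i j / ((∑ k : Fin N, P i k) * (∑ k : Fin N, P k j)))) ∧
        R = (-(∑ i : Fin N, ∑ j : Fin N, P i j * Real.log (P i j / (∑ k : Fin N, P i k)))
          - ∑ i : Fin N, ∑ j : Fin N, P i j * Real.log (P i j / (∑ k : Fin N, P k j))) ∧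
        E / (E + R) = (Real.exp 1)⁻¹ ∧
        -(E / (E + R)) * Real.log (E / (E + R)) = (Real.exp 1)⁻¹ := by
  obtain ⟨m, rfl⟩ : ∃ m, N = m + 3 := ⟨N - 3, by omega⟩
  obtain ⟨t, ht, hgt⟩ := exists_t m
  have hm : (0:ℝ) ≤ (m:ℝ) := Nat.cast_nonneg m
  have h3 : (0:ℝ) < (m:ℝ)+3 := by linarith
  have h2 : (0:ℝ) < (m:ℝ)+2 := by linarith
  set A := aFun m t with hAdef
  set B := bFun m t with hBdef
  have hApos : 0 < A := aFun_pos m ht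
  have hBnn : 0 ≤ B := bFun_nonneg m ht
  -- total mass identity
  have hsum1 : ((m:ℝ)+3) * A + ((m:ℝ)+3) * ((m:ℝ)+1) * B = 1 := by
    rw [hAdef, hBdef]
    unfold aFun bFun
    field_simp
    ring
  -- marginal identity
  have hmarg : A + ((m:ℝ)+1) * B = 1/((m:ℝ)+3) := by
    rw [hAdef, hBdef]
    unfold aFun bFun
    field_simp
    ring
  refine ⟨Pmat m A B, ?_, ?_, ?_, ?_⟩
  · intro i j
    unfold Pmat
    split_ifs
    · exact le_refl 0
    · exact hApos.le
    · exact hBnn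
  · intro i
    unfold Pmat
    simp
  · unfold Pmat
    rw [double_sum]
    exact hsum1
  · have hrow : ∀ i, (∑ k : Fin (m+3), Pmat m A B i k) = 1/((m:ℝ)+3) := by
      intro i
      unfold Pmat
      rw [row_sum]
      exact hmarg
    have hcol : ∀ j, (∑ k : Fin (m+3), Pmat m A B k j) = 1/((m:ℝ)+3) := by
      intro j
      unfold Pmat
      rw [col_sum]
      exact hmarg
    have hlogn : Real.log ((m:ℝ)+3) = Real.log ((m:ℝ)+3) := rfl
    -- expansions
    have hAc2 : A * Real.log (A / (1/((m:ℝ)+3) * (1/((m:ℝ)+3))))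
        = A * Real.log A + 2 * A * Real.log ((m:ℝ)+3) := by
      rw [show A / (1/((m:ℝ)+3) * (1/((m:ℝ)+3))) = A * (((m:ℝ)+3) * ((m:ℝ)+3)) by
        field_simp]
      rw [Real.log_mul hApos.ne' (by positivity), Real.log_mul h3.ne' h3.ne']
      ring
    have hBc2 : B * Real.log (B / (1/((m:ℝ)+3) * (1/((m:ℝ)+3))))
        = B * Real.log B + 2 * B * Real.log ((m:ℝ)+3) := by
      rcases eq_or_lt_of_le hBnn with h | h
    
      · simp [← h]
      · rw [show B / (1/((m:ℝ)+3) * (1/((m:ℝ)+3))) = B * (((m:ℝ)+3) * ((m:ℝ)+3)) by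
          field_simp]
        rw [Real.log_mul h.ne' (by positivity), Real.log_mul h3.ne' h3.ne']
        ring
    have hAc1 : A * Real.log (A / (1/((m:ℝ)+3)))
        = A * Real.log A + A * Real.log ((m:ℝ)+3) := by
      rw [show A / (1/((m:ℝ)+3)) = A * ((m:ℝ)+3) by field_simp]
      rw [Real.log_mul hApos.ne' h3.ne']
      ring
    have hBc1 : B * Real.log (B / (1/((m:ℝ)+3)))
        = B * Real.log B + B * Real.log ((m:ℝ)+3) := by
      rcases eq_or_lt_of_le hBnn with h | h
      · simp [← h]
      · rw [show B / (1/((m:ℝ)+3)) = B * ((m:ℝ)+3) by field_simp]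
        rw [Real.log_mul h.ne' h3.ne']
        ring
    have hSdef : SFun m t = ((m:ℝ)+3) * (A * Real.log A)
        + ((m:ℝ)+3)*((m:ℝ)+1) * (B * Real.log B) := rfl
    -- the E sum
    have hEsum : (∑ i : Fin (m+3), ∑ j : Fin (m+3),
          Pmat m A B i j * Real.log (Pmat m A B i j /
            ((∑ k : Fin (m+3), Pmat m A B i k) * (∑ k : Fin (m+3), Pmat m A B k j))))
        = SFun m t + 2 * Real.log ((m:ℝ)+3) := by
      have hterm : ∀ i j : Fin (m+3),
          Pmat m A B i j * Real.log (Pmat m A B i j /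
            ((∑ k : Fin (m+3), Pmat m A B i k) * (∑ k : Fin (m+3), Pmat m A B k j)))
          = (if j = i then 0 else if j = i + 1
              then A * Real.log (A / (1/((m:ℝ)+3) * (1/((m:ℝ)+3))))
              else B * Real.log (B / (1/((m:ℝ)+3) * (1/((m:ℝ)+3))))) := by
        intro i j
        rw [hrow i, hcol j]
        unfold Pmat
        split_ifs <;> simp
      simp only [hterm]
      rw [double_sum, hAc2, hBc2, hSdef]
      linear_combination (2 * Real.log ((m:ℝ)+3)) * hsum1
    have hRsum1 : (∑ i : Fin (m+3), ∑ j : Fin (m+3),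
          Pmat m A B i j * Real.log (Pmat m A B i j / (∑ k : Fin (m+3), Pmat m A B i k)))
        = SFun m t + Real.log ((m:ℝ)+3) := by
      have hterm : ∀ i j : Fin (m+3),
          Pmat m A B i j * Real.log (Pmat m A B i j / (∑ k : Fin (m+3), Pmat m A B i k))
          = (if j = i then 0 else if j = i + 1
              then A * Real.log (A / (1/((m:ℝ)+3)))
              else B * Real.log (B / (1/((m:ℝ)+3)))) := by
        intro i j
        rw [hrow i]
        unfold Pmat
        split_ifs <;> simp
      simp only [hterm]
      rw [double_sum, hAc1, hBc1, hSdef]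
      linear_combination (Real.log ((m:ℝ)+3)) * hsum1
    have hRsum2 : (∑ i : Fin (m+3), ∑ j : Fin (m+3),
          Pmat m A B i j * Real.log (Pmat m A B i j / (∑ k : Fin (m+3), Pmat m A B k j)))
        = SFun m t + Real.log ((m:ℝ)+3) := by
      have hterm : ∀ i j : Fin (m+3),
          Pmat m A B i j * Real.log (Pmat m A B i j / (∑ k : Fin (m+3), Pmat m A B k j))
          = (if j = i then 0 else if j = i + 1
              then A * Real.log (A / (1/((m:ℝ)+3)))
              else B * Real.log (B / (1/((m:ℝ)+3)))) := by
        intro i j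
        rw [hcol j]
        unfold Pmat
        split_ifs <;> simp
      simp only [hterm]
      rw [double_sum, hAc1, hBc1, hSdef]
      linear_combination (Real.log ((m:ℝ)+3)) * hsum1
    refine ⟨SFun m t + 2 * Real.log ((m:ℝ)+3),
      -2 * SFun m t - 2 * Real.log ((m:ℝ)+3), hEsum.symm, ?_, ?_, ?_⟩
    · rw [hRsum1, hRsum2]
      push_cast
      ring
    · have hER : SFun m t + 2 * Real.log ((m:ℝ)+3)
          + (-2 * SFun m t - 2 * Real.log ((m:ℝ)+3)) = -SFun m t := by ring
      rw [hER]
      exact hgt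
    · have hER : SFun m t + 2 * Real.log ((m:ℝ)+3)
          + (-2 * SFun m t - 2 * Real.log ((m:ℝ)+3)) = -SFun m t := by ring
      rw [hER, hgt, Real.log_inv, Real.log_exp]
      ring
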